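/- Let G be a connected solvable subgroup of GL_n(ℂ) (with the subspace topology). Then the commutator subgroup G' of G contains no nontrivial compact subgroup; in particular G' is torsion-free. -/

import Mathlib

open Module FiniteDimensional

/-- Eigenvalue is determined by a nonzero eigenvector. -/
lemma eig_unique {V : Type} [AddCommGroup V] [Module ℂ V] {f : Module.End ℂ V} {v : V}
    (hv : v ≠ 0) {a b : ℂ} (ha : f v = a • v) (hb : f v = b • v) : a = b := by
  have h : (a - b) • v = 0 := by rw [sub_smul, ← ha, ← hb, sub_self]
  rcases smul_eq_zero.mp h with h | h
  · exact sub_eq_zero.mp h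
  · exact absurd h hv

/-- A commuting family of endomorphisms of a nontrivial f.d. complex vector space has a
common eigenvector. -/
lemma exists_common_eigenvector_aux (d : ℕ) :
    ∀ (V : Type) [AddCommGroup V] [Module ℂ V] [FiniteDimensional ℂ V] [Nontrivial V],
    Module.finrank ℂ V ≤ d →
    ∀ {ι : Type} (f : ι → Module.End ℂ V), (∀ i j, Commute (f i) (f j)) →
    ∃ v : V, v ≠ 0 ∧ ∀ i, ∃ c : ℂ, f i v = c • v := by
  induction d with
  | zero =>
    intro V _ _ _ _ hd
    exact absurd (le_antisymm hd (Nat.zero_le _)) (Module.finrank_pos (R := ℂ) (M := V)).ne'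
  | succ d ih =>
    intro V _ _ _ _ hd ι f hcomm
    by_cases hs : ∀ i, ∃ c : ℂ, f i = c • (1 : Module.End ℂ V)
    · obtain ⟨v, hv⟩ := exists_ne (0 : V)
      refine ⟨v, hv, fun i => ?_⟩
      obtain ⟨c, hc⟩ := hs i
      exact ⟨c, by rw [hc]; rfl⟩
    · push_neg at hs
      obtain ⟨i₀, hi₀⟩ := hs
      obtain ⟨μ, hμ⟩ := Module.End.exists_eigenvalue (f i₀)
      have hEne : Module.End.eigenspace (f i₀) μ ≠ ⊥ := hμ
      set E := Module.End.eigenspace (f i₀) μ with hE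
      have hEtop : E ≠ ⊤ := by
        intro h
        apply hi₀ μ
        ext w
        have hw : w ∈ E := h ▸ Submodule.mem_top
        rw [hE] at hw
        exact Module.End.mem_eigenspace_iff.mp hw
      have hmapsto : ∀ i, Set.MapsTo (f i) (E : Set V) (E : Set V) := by
        intro i x hx
        have hx' : f i₀ x = μ • x := (Module.End.mem_eigenspace_iff).mp hx
        have : f i₀ (f i x) = μ • f i x := by
          have := (hcomm i₀ i).eq
          calc f i₀ (f i x) = (f i₀ * f i) x := rfl
            _ = (f i * f i₀) x := by rw [this]
            _ = f i (f i₀ x) := rfl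
            _ = μ • f i x := by rw [hx', map_smul]
        exact (Module.End.mem_eigenspace_iff).mpr this
      haveI : Nontrivial E := Submodule.nontrivial_iff_ne_bot.mpr hEne
      have hlt : Module.finrank ℂ E < Module.finrank ℂ V :=
        Submodule.finrank_lt hEtop
      have hle : Module.finrank ℂ E ≤ d := by omega
      obtain ⟨v, hv0, hv⟩ := ih E hle (fun i => (f i).restrict (hmapsto i))
        (fun i j => LinearMap.restrict_commute (hcomm i j) _ _)
      refine ⟨(v : V), by simpa using hv0, fun i => ?_⟩
      obtain ⟨c, hc⟩ := hv i
      refine ⟨c, ?_⟩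
      have := congrArg (Subtype.val) hc
      exact this

/-- The set of joint eigencharacters with nonzero joint eigenspace is finite. -/
lemma finite_characters {V : Type} [AddCommGroup V] [Module ℂ V] [FiniteDimensional ℂ V]
    {ι : Type} (f : ι → Module.End ℂ V) :
    {χ : ι → ℂ | (⨅ i, Module.End.eigenspace (f i) (χ i)) ≠ ⊥}.Finite := by
  classical
  set S := {χ : ι → ℂ | (⨅ i, Module.End.eigenspace (f i) (χ i)) ≠ ⊥} with hS
  have hchoice : ∀ χ : S, ∃ v : V, v ∈ (⨅ i, Module.End.eigenspace (f i) (χ.1 i)) ∧ v ≠ 0 := by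
    intro χ
    obtain ⟨v, hv, hv0⟩ := Submodule.ne_bot_iff _ |>.mp χ.2
    exact ⟨v, hv, hv0⟩
  choose v hvmem hv0 using hchoice
  have heig : ∀ (χ : S) (i : ι), f i (v χ) = χ.1 i • v χ := by
    intro χ i
    have := (Submodule.mem_iInf _).mp (hvmem χ) i
    exact (Module.End.mem_eigenspace_iff).mp this
  have hli : LinearIndependent ℂ v := by
    rw [linearIndependent_iff']
    suffices H : ∀ m : ℕ, ∀ s : Finset S, ∀ g : S → ℂ, s.card ≤ m →
        ∑ χ ∈ s, g χ • v χ = 0 → ∀ i ∈ s, g i = 0 by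
      exact fun s g h => H s.card s g le_rfl h
    intro m
    induction m with
    | zero =>
      intro s g hcard _ i hi
      have : s = ∅ := Finset.card_eq_zero.mp (Nat.le_zero.mp hcard)
      simp [this] at hi
    | succ m IH =>
    intro s g hcard hsum i hi
    by_cases h1 : s.card ≤ 1
    · have hs : s = {i} := by
        apply Finset.eq_singleton_iff_unique_mem.mpr
        exact ⟨hi, fun b hb => Finset.card_le_one.mp h1 b hb i hi⟩
      rw [hs, Finset.sum_singleton] at hsum
      rcases smul_eq_zero.mp hsum with h | h
      · exact h
      · exact absurd h (hv0 i)
    · push_neg at h1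
      obtain ⟨j, hj, hji⟩ := Finset.exists_mem_ne h1 i
      obtain ⟨i₀, hi₀⟩ := Function.ne_iff.mp (Subtype.coe_ne_coe.mpr hji)
      -- apply (f i₀ - χ_j i₀ • 1) to the relation
      set A : Module.End ℂ V := f i₀ - (j.1 i₀) • 1 with hA
      have hAv : ∀ χ : S, A (v χ) = (χ.1 i₀ - j.1 i₀) • v χ := by
        intro χ
        simp only [hA, LinearMap.sub_apply, LinearMap.smul_apply, Module.End.one_apply,
          heig χ i₀, sub_smul]
      have hsum2 : ∑ χ ∈ s.erase j, (g χ * (χ.1 i₀ - j.1 i₀)) • v χ = 0 := by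
        have := congrArg A hsum
        rw [map_sum, map_zero] at this
        have h2 : ∑ χ ∈ s, (g χ * (χ.1 i₀ - j.1 i₀)) • v χ = 0 := by
          rw [← this]
          apply Finset.sum_congr rfl
          intro χ _
          rw [map_smul, hAv χ, smul_smul]
        rw [← Finset.add_sum_erase _ _ hj] at h2
        simpa using h2
      have hcard2 : (s.erase j).card ≤ m := by
        have := Finset.card_erase_of_mem hj
        omega
      have := IH _ _ hcard2 hsum2 i (Finset.mem_erase.mpr ⟨Ne.symm hji, hi⟩)
      rcases mul_eq_zero.mp this with h | h
      · exact h
      · exact absurd (sub_eq_zero.mp h) (Ne.symm hi₀)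
  haveI : Finite S := hli.finite
  exact Set.finite_coe_iff.mp this

open scoped Pointwise
open scoped commutatorElement

lemma isPreconnected_mul {G : Type} [Group G] [TopologicalSpace G] [IsTopologicalGroup G]
    {s t : Set G} (hs : IsPreconnected s) (ht : IsPreconnected t) : IsPreconnected (s * t) := by
  have : s * t = (fun p : G × G => p.1 * p.2) '' (s ×ˢ t) := by
    rw [Set.image_prod]; rfl
  rw [this]
  exact (hs.prod ht).image _ (continuous_mul.continuousOn)

theorem isConnected_commutator (G : Type) [Group G] [TopologicalSpace G] [IsTopologicalGroup G]
    [ConnectedSpace G] : IsConnected ((commutator G : Subgroup G) : Set G) := by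
  classical
  set S : Set G := commutatorSet G with hSdef
  have h1S : (1 : G) ∈ S := one_mem_commutatorSet (G := G)
  have hSinv : S⁻¹ = S := by
    ext x
    simp only [Set.mem_inv]
    constructor
    · rintro ⟨g, h, hgh⟩
      refine ⟨h, g, ?_⟩
      rw [← inv_inv x, ← hgh]
      group
    · rintro ⟨g, h, hgh⟩
      exact ⟨h, g, by rw [← hgh]; group⟩
  have hSconn : IsPreconnected S := by
    have : S = (fun p : G × G => ⁅p.1, p.2⁆) '' Set.univ := by
      ext x
      simp only [Set.image_univ, Set.mem_setOf_eq]
      constructor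
      · rintro ⟨g, h, hgh⟩; exact ⟨(g, h), hgh⟩
      · rintro ⟨⟨g, h⟩, hgh⟩; exact ⟨g, h, hgh⟩
    rw [this]
    apply IsPreconnected.image
    · exact isPreconnected_univ
    · apply Continuous.continuousOn
      continuity
  -- each power is preconnected and contains 1
  have hpow1 : ∀ m : ℕ, (1 : G) ∈ S ^ (m + 1) := by
    intro m
    induction m with
    | zero => simpa using h1S
    | succ m ih => rw [pow_succ]; simpa using Set.mul_mem_mul ih h1S
  have hpowconn : ∀ m : ℕ, IsPreconnected (S ^ (m + 1)) := by
    intro m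
    induction m with
    | zero => simpa using hSconn
    | succ m ih => rw [pow_succ]; exact isPreconnected_mul ih hSconn
  have hcarrier : ((commutator G : Subgroup G) : Set G) = ⋃ m : ℕ, S ^ (m + 1) := by
    apply Set.Subset.antisymm
    · intro x hx
      rw [commutator_eq_closure] at hx
      induction hx using Subgroup.closure_induction with
      | mem y hy => exact Set.mem_iUnion.mpr ⟨0, by simpa using hy⟩
      | one => exact Set.mem_iUnion.mpr ⟨0, by simpa using h1S⟩
      | mul y z _ _ hy hz =>
        obtain ⟨a, ha⟩ := Set.mem_iUnion.mp hy
        obtain ⟨b, hb⟩ := Set.mem_iUnion.mp hz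
        refine Set.mem_iUnion.mpr ⟨a + b + 1, ?_⟩
        have : S ^ (a + 1) * S ^ (b + 1) = S ^ (a + b + 1 + 1) := by
          rw [← pow_add]; ring_nf
        rw [← this]
        exact Set.mul_mem_mul ha hb
      | inv y _ hy =>
        obtain ⟨a, ha⟩ := Set.mem_iUnion.mp hy
        refine Set.mem_iUnion.mpr ⟨a, ?_⟩
        have : y⁻¹ ∈ (S ^ (a + 1))⁻¹ := by simpa using ha
        rwa [← inv_pow, hSinv] at this
    · intro x hx
      obtain ⟨m, hm⟩ := Set.mem_iUnion.mp hx
      clear hx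
      induction m generalizing x with
      | zero =>
        rw [commutator_eq_closure]
        exact Subgroup.subset_closure (by simpa using hm)
      | succ m ih =>
        rw [pow_succ] at hm
        obtain ⟨a, ha, b, hb, rfl⟩ := Set.mem_mul.mp hm
        refine mul_mem (ih ha) ?_
        rw [commutator_eq_closure]
        exact Subgroup.subset_closure hb
  rw [hcarrier]
  refine ⟨⟨1, Set.mem_iUnion.mpr ⟨0, hpow1 0⟩⟩, ?_⟩
  apply isPreconnected_iUnion
  · exact ⟨1, Set.mem_iInter.mpr hpow1⟩
  · exact hpowconn

open Module

section RepHelpers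

variable {G V : Type} [Group G] [AddCommGroup V] [Module ℂ V] (ρ : G →* (Module.End ℂ V)ˣ)

/-- Restriction of a representation to an invariant submodule, on endomorphism level. -/
noncomputable def resEnd (W : Submodule ℂ V) (hW : ∀ (g : G), ∀ v ∈ W, (ρ g).1 v ∈ W) (g : G) :
    Module.End ℂ ↥W :=
  (ρ g).1.restrict (fun x hx => hW g x hx)

lemma resEnd_coe {W : Submodule ℂ V} (hW : ∀ (g : G), ∀ v ∈ W, (ρ g).1 v ∈ W) (g : G) (x : ↥W) :
    (resEnd ρ W hW g x : V) = (ρ g).1 x :=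
  rfl

lemma resEnd_mul {W : Submodule ℂ V} (hW : ∀ (g : G), ∀ v ∈ W, (ρ g).1 v ∈ W) (g h : G) :
    resEnd ρ W hW (g * h) = resEnd ρ W hW g * resEnd ρ W hW h := by
  apply LinearMap.ext; intro x
  apply Subtype.ext
  simp only [Module.End.mul_apply, resEnd_coe, map_mul, Units.val_mul, Module.End.mul_apply]

lemma resEnd_one {W : Submodule ℂ V} (hW : ∀ (g : G), ∀ v ∈ W, (ρ g).1 v ∈ W) :
    resEnd ρ W hW 1 = 1 := by
  apply LinearMap.ext; intro x
  apply Subtype.ext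
  simp [resEnd_coe]

/-- Restriction of a representation to an invariant submodule. -/
noncomputable def resHom (W : Submodule ℂ V) (hW : ∀ (g : G), ∀ v ∈ W, (ρ g).1 v ∈ W) :
    G →* (Module.End ℂ ↥W)ˣ where
  toFun g :=
    { val := resEnd ρ W hW g
      inv := resEnd ρ W hW g⁻¹
      val_inv := by rw [← resEnd_mul, mul_inv_cancel, resEnd_one]
      inv_val := by rw [← resEnd_mul, inv_mul_cancel, resEnd_one] }
  map_one' := Units.ext (resEnd_one ρ hW)
  map_mul' g h := Units.ext (resEnd_mul ρ hW g h)

lemma resHom_coe {W : Submodule ℂ V} (hW : ∀ (g : G), ∀ v ∈ W, (ρ g).1 v ∈ W) (g : G) :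
    ((resHom ρ W hW g : (Module.End ℂ ↥W)ˣ) : Module.End ℂ ↥W) = resEnd ρ W hW g :=
  rfl

/-- Quotient representation, on endomorphism level. -/
noncomputable def quotEnd (L : Submodule ℂ V) (hL : ∀ (g : G), ∀ v ∈ L, (ρ g).1 v ∈ L) (g : G) :
    Module.End ℂ (V ⧸ L) :=
  Submodule.mapQ L L (ρ g).1 (fun v hv => hL g v hv)

lemma quotEnd_mk {L : Submodule ℂ V} (hL : ∀ (g : G), ∀ v ∈ L, (ρ g).1 v ∈ L) (g : G) (u : V) :
    quotEnd ρ L hL g (Submodule.Quotient.mk u) = Submodule.Quotient.mk ((ρ g).1 u) :=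
  Submodule.mapQ_apply _ _ _ _

lemma quotEnd_mul {L : Submodule ℂ V} (hL : ∀ (g : G), ∀ v ∈ L, (ρ g).1 v ∈ L) (g h : G) :
    quotEnd ρ L hL (g * h) = quotEnd ρ L hL g * quotEnd ρ L hL h := by
  apply Submodule.linearMap_qext
  apply LinearMap.ext; intro u
  simp only [LinearMap.comp_apply, Submodule.mkQ_apply, Module.End.mul_apply, quotEnd_mk,
    map_mul, Units.val_mul]

lemma quotEnd_one {L : Submodule ℂ V} (hL : ∀ (g : G), ∀ v ∈ L, (ρ g).1 v ∈ L) :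
    quotEnd ρ L hL 1 = 1 := by
  apply Submodule.linearMap_qext
  apply LinearMap.ext; intro u
  simp [quotEnd_mk]

/-- Quotient representation. -/
noncomputable def quotHom (L : Submodule ℂ V) (hL : ∀ (g : G), ∀ v ∈ L, (ρ g).1 v ∈ L) :
    G →* (Module.End ℂ (V ⧸ L))ˣ where
  toFun g :=
    { val := quotEnd ρ L hL g
      inv := quotEnd ρ L hL g⁻¹
      val_inv := by rw [← quotEnd_mul, mul_inv_cancel, quotEnd_one]
      inv_val := by rw [← quotEnd_mul, inv_mul_cancel, quotEnd_one] }
  map_one' := Units.ext (quotEnd_one ρ hL)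
  map_mul' g h := Units.ext (quotEnd_mul ρ hL g h)

lemma rep_apply_ne_zero (g : G) {v : V} (hv : v ≠ 0) : (ρ g).1 v ≠ 0 := by
  intro h
  apply hv
  have : (ρ g⁻¹).1 ((ρ g).1 v) = v := by
    rw [← Module.End.mul_apply, ← Units.val_mul, ← map_mul, inv_mul_cancel, map_one,
      Units.val_one, Module.End.one_apply]
  rw [← this, h, map_zero]

end RepHelpers

section DualHelpers

variable {V : Type} [AddCommGroup V] [Module ℂ V] [Module.Free ℂ V]

lemma exists_dual_one {v : V} (hv : v ≠ 0) : ∃ φ : Module.Dual ℂ V, φ v = 1 := by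
  by_contra h
  push_neg at h
  apply hv
  rw [← Module.forall_dual_apply_eq_zero_iff ℂ v]
  intro φ
  by_contra hφ
  exact h ((φ v)⁻¹ • φ) (by simp [inv_mul_cancel₀ hφ])

lemma eq_of_forall_dual {x y : V} (h : ∀ φ : Module.Dual ℂ V, φ x = φ y) : x = y := by
  rw [← sub_eq_zero, ← Module.forall_dual_apply_eq_zero_iff ℂ (x - y)]
  intro φ
  rw [map_sub, h φ, sub_self]

end DualHelpers

lemma derivedSeries_commutator_of_bot {G : Type} [Group G] {k : ℕ}
    (h : derivedSeries G (k + 1) = ⊥) : derivedSeries ↥(commutator G) k = ⊥ := by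
  have key : ∀ m : ℕ, (derivedSeries ↥(commutator G) m).map (commutator G).subtype ≤
      derivedSeries G (m + 1) := by
    intro m
    induction m with
    | zero =>
      rw [derivedSeries_zero]
      rw [← MonoidHom.range_eq_map, Subgroup.range_subtype, derivedSeries_one]
    | succ m ih =>
      rw [derivedSeries_succ, derivedSeries_succ, Subgroup.map_commutator]
      exact Subgroup.commutator_mono ih ih
  have h2 : (derivedSeries ↥(commutator G) k).map (commutator G).subtype = ⊥ :=
    le_bot_iff.mp (h ▸ key k)
  have h3 := (Subgroup.map_eq_bot_iff _).mp h2
  rwa [Subgroup.ker_subtype, le_bot_iff] at h3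

/-- Lie–Kolchin: a connected solvable (derived length ≤ k) topological group acting
continuously on a nontrivial f.d. complex vector space has a common eigenvector. -/
theorem lie_kolchin :
    ∀ (k : ℕ) (G : Type) [Group G] [TopologicalSpace G] [IsTopologicalGroup G] [ConnectedSpace G]
      (V : Type) [AddCommGroup V] [Module ℂ V] [FiniteDimensional ℂ V] [Nontrivial V]
      (ρ : G →* (Module.End ℂ V)ˣ),
      (∀ (φ : Module.Dual ℂ V) (v : V), Continuous fun g : G => φ ((ρ g).1 v)) →
      derivedSeries G k = ⊥ →
      ∃ v : V, v ≠ 0 ∧ ∀ g : G, ∃ c : ℂ, (ρ g).1 v = c • v := by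
  intro k
  induction k with
  | zero =>
    intro G _ _ _ _ V _ _ _ _ ρ hρ hbot
    obtain ⟨v, hv⟩ := exists_ne (0 : V)
    refine ⟨v, hv, fun g => ⟨1, ?_⟩⟩
    have hg : g = 1 := by
      have : g ∈ (⊥ : Subgroup G) := by
        rw [← hbot, derivedSeries_zero]; trivial
      simpa using this
    rw [hg, map_one, Units.val_one, Module.End.one_apply, one_smul]
  | succ k ih =>
    intro G _ _ _ _ V _ _ _ _ ρ hρ hbot
    classical
    set N : Subgroup G := commutator G with hN
    haveI hNconn : ConnectedSpace ↥N := Subtype.connectedSpace (isConnected_commutator G)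
    have hNbot : derivedSeries ↥N k = ⊥ := derivedSeries_commutator_of_bot hbot
    set ρN : ↥N →* (Module.End ℂ V)ˣ := ρ.comp N.subtype with hρN
    have hρNc : ∀ (φ : Module.Dual ℂ V) (v : V), Continuous fun x : ↥N => φ ((ρN x).1 v) :=
      fun φ v => (hρ φ v).comp continuous_subtype_val
    -- common eigenvector for N
    obtain ⟨v₀, hv₀, hcommon⟩ := ih ↥N V ρN hρNc hNbot
    set χ₀ : ↥N → ℂ := fun x => Classical.choose (hcommon x) with hχ₀def
    have hχ₀ : ∀ x : ↥N, (ρN x).1 v₀ = χ₀ x • v₀ := fun x => Classical.choose_spec (hcommon x)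
    -- simultaneous eigenspaces
    set E : (↥N → ℂ) → Submodule ℂ V :=
      fun χ => ⨅ x : ↥N, Module.End.eigenspace ((ρN x).1) (χ x) with hE
    have hmemE : ∀ (χ : ↥N → ℂ) (v : V), v ∈ E χ ↔ ∀ x : ↥N, (ρN x).1 v = χ x • v := by
      intro χ v
      simp only [hE, Submodule.mem_iInf, Module.End.mem_eigenspace_iff]
    have hv₀E : v₀ ∈ E χ₀ := (hmemE χ₀ v₀).mpr hχ₀
    set S : Set (↥N → ℂ) := {χ | E χ ≠ ⊥} with hS
    have hSfin : S.Finite := finite_characters (fun x : ↥N => (ρN x).1)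
    have hχ₀S : χ₀ ∈ S := Submodule.ne_bot_iff _ |>.mpr ⟨v₀, hv₀E, hv₀⟩
    -- conjugation action
    haveI : N.Normal := by rw [hN]; infer_instance
    set conj : G → ↥N → ↥N := fun g x =>
      ⟨g⁻¹ * (x : G) * g, by
        have := ‹N.Normal›.conj_mem (x : G) x.2 g⁻¹
        rwa [inv_inv] at this⟩ with hconj
    have hmap : ∀ (g : G) (χ : ↥N → ℂ) (v : V), v ∈ E χ →
        (ρ g).1 v ∈ E (fun x => χ (conj g x)) := by
      intro g χ v hv
      rw [hmemE]
      intro x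
      have h1 : (ρN x).1 ((ρ g).1 v) = (ρ ((x : G) * g)).1 v := by
        rw [map_mul, Units.val_mul, Module.End.mul_apply]; rfl
      have h2 : (x : G) * g = g * (g⁻¹ * (x : G) * g) := by group
      have h3 : (ρ (g⁻¹ * (x : G) * g)).1 v = χ (conj g x) • v := by
        have := (hmemE χ v).mp hv (conj g x)
        exact this
      rw [h1, h2, map_mul, Units.val_mul, Module.End.mul_apply, h3, map_smul]
    -- the closed pieces
    set C : (↥N → ℂ) → Set G := fun χ' => {g | ∀ v ∈ E χ₀, (ρ g).1 v ∈ E χ'} with hC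
    have hCclosed : ∀ χ', IsClosed (C χ') := by
      intro χ'
      have : C χ' = ⋂ (v : V) (_ : v ∈ E χ₀) (x : ↥N) (φ : Module.Dual ℂ V),
          {g : G | φ ((ρN x).1 ((ρ g).1 v)) = χ' x * φ ((ρ g).1 v)} := by
        ext g
        simp only [hC, Set.mem_setOf_eq, Set.mem_iInter]
        constructor
        · intro h v hv x φ
          have := (hmemE χ' _).mp (h v hv) x
          rw [this, map_smul, smul_eq_mul]
        · intro h v hv
          rw [hmemE]
          intro x
          apply eq_of_forall_dual
          intro φ
          rw [map_smul, smul_eq_mul]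
          exact h v hv x φ
      rw [this]
      apply isClosed_iInter; intro v
      apply isClosed_iInter; intro _
      apply isClosed_iInter; intro x
      apply isClosed_iInter; intro φ
      exact isClosed_eq (hρ (φ ∘ₗ (ρN x).1) v) (continuous_const.mul (hρ φ v))
    have hginC : ∀ g : G, g ∈ C (fun x => χ₀ (conj g x)) :=
      fun g v hv => hmap g χ₀ v hv
    have hgS : ∀ g : G, (fun x => χ₀ (conj g x)) ∈ S := by
      intro g
      apply Submodule.ne_bot_iff _ |>.mpr
      exact ⟨(ρ g).1 v₀, hmap g χ₀ v₀ hv₀E, rep_apply_ne_zero ρ g hv₀⟩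
    have hCdisj : ∀ (g : G) (χ' χ'' : ↥N → ℂ), g ∈ C χ' → g ∈ C χ'' → χ' = χ'' := by
      intro g χ' χ'' h' h''
      funext x
      have h1 := (hmemE χ' _).mp (h' v₀ hv₀E) x
      have h2 := (hmemE χ'' _).mp (h'' v₀ hv₀E) x
      exact eig_unique (rep_apply_ne_zero ρ g hv₀) h1 h2
    have hCuniv : C χ₀ = Set.univ := by
      have hopen : IsOpen (C χ₀) := by
        rw [← isClosed_compl_iff]
        have : (C χ₀)ᶜ = ⋃ χ' ∈ S \ {χ₀}, C χ' := by
          ext g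
          simp only [Set.mem_compl_iff, Set.mem_iUnion, Set.mem_diff, Set.mem_singleton_iff]
          constructor
          · intro hg
            refine ⟨fun x => χ₀ (conj g x), ⟨hgS g, ?_⟩, hginC g⟩
            intro heq
            exact hg (heq ▸ hginC g)
          · rintro ⟨χ', ⟨_, hne⟩, hgχ'⟩ hgχ₀
            exact hne (hCdisj g χ' χ₀ hgχ' hgχ₀)
        rw [this]
        exact (hSfin.diff (t := {χ₀})).isClosed_biUnion (fun χ' _ => hCclosed χ')
      have hone : (1 : G) ∈ C χ₀ := by
        intro v hv
        rw [map_one, Units.val_one, Module.End.one_apply]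
        exact hv
      exact IsClopen.eq_univ ⟨hCclosed χ₀, hopen⟩ ⟨1, hone⟩
    -- W is G-invariant
    set W : Submodule ℂ V := E χ₀ with hWdef
    have hWinv : ∀ (g : G), ∀ v ∈ W, (ρ g).1 v ∈ W := by
      intro g v hv
      have : g ∈ C χ₀ := hCuniv ▸ Set.mem_univ g
      exact this v hv
    haveI : Nontrivial ↥W := Submodule.nontrivial_iff_ne_bot.mpr hχ₀S
    -- determinant character
    set δ : G →* ℂˣ :=
      (Units.map (LinearMap.det : Module.End ℂ ↥W →* ℂ)).comp (resHom ρ W hWinv) with hδ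
    have hδ1 : ∀ x ∈ commutator G, δ x = 1 := by
      intro x hx
      have : commutator G ≤ δ.ker := by
        rw [commutator_def]
        apply Subgroup.commutator_le.mpr
        intro g₁ _ g₂ _
        rw [MonoidHom.mem_ker, map_commutatorElement]
        exact commutatorElement_eq_one_iff_commute.mpr (Commute.all _ _)
      exact this hx
    have hscal : ∀ x : ↥N, resEnd ρ W hWinv (x : G) = χ₀ x • 1 := by
      intro x
      apply LinearMap.ext; intro w
      apply Subtype.ext
      have h1 : (resEnd ρ W hWinv (x : G) w : V) = (ρ ((x : G))).1 (w : V) := rfl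
      have h2 : (ρN x).1 (w : V) = χ₀ x • (w : V) := (hmemE χ₀ _).mp w.2 x
      rw [h1]
      have h3 : (ρ ((x : G))).1 (w : V) = (ρN x).1 (w : V) := rfl
      rw [h3, h2]
      rfl
    have hd : 0 < Module.finrank ℂ ↥W := Module.finrank_pos
    have hroot : ∀ x : ↥N, (χ₀ x) ^ (Module.finrank ℂ ↥W) = 1 := by
      intro x
      have hx : (x : G) ∈ commutator G := x.2
      have := hδ1 (x : G) hx
      have hval := congrArg Units.val this
      have : LinearMap.det (resEnd ρ W hWinv (x : G)) = 1 := hval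
      rw [hscal x, LinearMap.det_smul, map_one, mul_one] at this
      exact this
    -- χ₀ is continuous and takes values in a finite set, hence is constant = 1
    obtain ⟨φ₀, hφ₀⟩ := exists_dual_one hv₀
    have hχcont : Continuous χ₀ := by
      have : χ₀ = fun x => φ₀ ((ρN x).1 v₀) := by
        funext x
        rw [hχ₀ x, map_smul, smul_eq_mul, hφ₀, mul_one]
      rw [this]
      exact hρNc φ₀ v₀
    have hχ₀one : χ₀ 1 = 1 := by
      have h1 := hχ₀ 1
      rw [map_one, Units.val_one, Module.End.one_apply] at h1
      exact eig_unique (f := (1 : Module.End ℂ V)) hv₀ h1 (by rw [Module.End.one_apply, one_smul])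
    have hχtriv : ∀ x : ↥N, χ₀ x = 1 := by
      set A : Set ↥N := χ₀ ⁻¹' {1} with hA
      have hAclosed : IsClosed A := (isClosed_singleton).preimage hχcont
      have hroots : ({z : ℂ | z ^ (Module.finrank ℂ ↥W) = 1}).Finite := by
        apply Set.Finite.subset
          (Polynomial.finite_setOf_isRoot (Polynomial.X_pow_sub_C_ne_zero hd (1 : ℂ)))
        intro z hz
        simp only [Set.mem_setOf_eq, Polynomial.IsRoot, Polynomial.eval_sub,
          Polynomial.eval_pow, Polynomial.eval_X, Polynomial.eval_C]
        rw [Set.mem_setOf_eq] at hz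
        rw [hz, sub_self]
      have hAopen : IsOpen A := by
        rw [← isClosed_compl_iff]
        have : Aᶜ = χ₀ ⁻¹' ({z : ℂ | z ^ (Module.finrank ℂ ↥W) = 1} \ {1}) := by
          ext x
          simp only [hA, Set.mem_compl_iff, Set.mem_preimage, Set.mem_singleton_iff,
            Set.mem_diff, Set.mem_setOf_eq]
          constructor
          · intro h; exact ⟨hroot x, h⟩
          · intro h; exact h.2
        rw [this]
        exact ((hroots.diff (t := {1})).isClosed).preimage hχcont
      have hAuniv : A = Set.univ :=
        IsClopen.eq_univ ⟨hAclosed, hAopen⟩ ⟨1, by simp [hA, hχ₀one]⟩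
      intro x
      have : x ∈ A := hAuniv ▸ Set.mem_univ x
      exact this
    have htriv : ∀ x : ↥N, resEnd ρ W hWinv (x : G) = 1 := by
      intro x
      rw [hscal x, hχtriv x, one_smul]
    -- the restricted action is commutative
    have hcommres : ∀ g h : G, Commute (resEnd ρ W hWinv g) (resEnd ρ W hWinv h) := by
      intro g h
      have key : ∀ a b : G, resEnd ρ W hWinv (a * b) = resEnd ρ W hWinv (b * a) := by
        intro a b
        have hab : a * b = ⁅a, b⁆ * (b * a) := by group
        have hmem : ⁅a, b⁆ ∈ N := Subgroup.commutator_mem_commutator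
          (Subgroup.mem_top a) (Subgroup.mem_top b)
        rw [hab, resEnd_mul, htriv ⟨⁅a, b⁆, hmem⟩, one_mul]
      unfold Commute SemiconjBy
      rw [← resEnd_mul, ← resEnd_mul, key]
    -- common eigenvector for the commuting family
    obtain ⟨w, hw0, hw⟩ := exists_common_eigenvector_aux (Module.finrank ℂ ↥W) ↥W le_rfl
      (fun g : G => resEnd ρ W hWinv g) hcommres
    refine ⟨(w : V), by simpa using hw0, fun g => ?_⟩
    obtain ⟨c, hc⟩ := hw g
    refine ⟨c, ?_⟩
    have := congrArg Subtype.val hc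
    rw [resEnd_coe] at this
    rw [this]
    rfl

/-- Elements of the commutator subgroup of a connected solvable group act unipotently. -/
theorem commutator_nilpotent :
    ∀ (d : ℕ) (G : Type) [Group G] [TopologicalSpace G] [IsTopologicalGroup G] [ConnectedSpace G]
      [Group.IsSolvable G] (V : Type) [AddCommGroup V] [Module ℂ V] [FiniteDimensional ℂ V],
      Module.finrank ℂ V ≤ d →
      ∀ (ρ : G →* (Module.End ℂ V)ˣ),
      (∀ (φ : Module.Dual ℂ V) (v : V), Continuous fun g : G => φ ((ρ g).1 v)) →
      ∀ g : G, g ∈ commutator G → IsNilpotent ((ρ g).1 - 1) := by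
  intro d
  induction d with
  | zero =>
    intro G _ _ _ _ _ V _ _ _ hd ρ hρ g hg
    haveI : Subsingleton V := Module.finrank_zero_iff.mp (Nat.le_zero.mp hd)
    exact ⟨1, by rw [pow_one]; apply LinearMap.ext; intro v; exact Subsingleton.elim _ _⟩
  | succ d ih =>
    intro G _ _ _ _ _ V _ _ _ hd ρ hρ g hg
    classical
    rcases subsingleton_or_nontrivial V with hV | hV
    · exact ⟨1, by rw [pow_one]; apply LinearMap.ext; intro v; exact Subsingleton.elim _ _⟩
    obtain ⟨k, hk⟩ := ‹Group.IsSolvable G›.solvable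
    obtain ⟨v, hv, hcom⟩ := lie_kolchin k G V ρ hρ hk
    set c : G → ℂ := fun h => Classical.choose (hcom h) with hcdef
    have hc : ∀ h : G, (ρ h).1 v = c h • v := fun h => Classical.choose_spec (hcom h)
    have hcne : ∀ h : G, c h ≠ 0 := by
      intro h h0
      exact rep_apply_ne_zero ρ h hv (by rw [hc h, h0, zero_smul])
    set L : Submodule ℂ V := Submodule.span ℂ {v} with hLdef
    have hvL : v ∈ L := Submodule.mem_span_singleton_self v
    have hL : ∀ (h : G), ∀ u ∈ L, (ρ h).1 u ∈ L := by
      intro h u hu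
      obtain ⟨a, rfl⟩ := Submodule.mem_span_singleton.mp hu
      rw [map_smul, hc h]
      exact Submodule.smul_mem _ _ (Submodule.smul_mem _ _ hvL)
    -- the eigenvalue character is a homomorphism killing the commutator subgroup
    have hcmul : ∀ a b : G, c (a * b) = c a * c b := by
      intro a b
      have h1 : (ρ (a * b)).1 v = (c a * c b) • v := by
        rw [map_mul, Units.val_mul, Module.End.mul_apply, hc b, map_smul, hc a, smul_smul,
          mul_comm (c b) (c a)]
      exact eig_unique hv (hc (a * b)) h1
    set chom : G →* ℂˣ := MonoidHom.mk' (fun h => Units.mk0 (c h) (hcne h))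
      (fun a b => Units.ext (by simp only [Units.val_mul, Units.val_mk0]; exact hcmul a b)) with hchom
    have hctriv : c g = 1 := by
      have hker : commutator G ≤ chom.ker := by
        rw [commutator_def]
        apply Subgroup.commutator_le.mpr
        intro g₁ _ g₂ _
        rw [MonoidHom.mem_ker, map_commutatorElement]
        exact commutatorElement_eq_one_iff_commute.mpr (Commute.all _ _)
      have h1 := hker hg
      rw [MonoidHom.mem_ker] at h1
      exact congrArg Units.val h1
    -- quotient representation
    haveI : Nontrivial ↥L := Submodule.nontrivial_span_singleton hv
    have hLrank : 0 < Module.finrank ℂ ↥L := Module.finrank_pos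
    have hQrank : Module.finrank ℂ (V ⧸ L) ≤ d := by
      have := Submodule.finrank_quotient_add_finrank L
      omega
    set ρQ : G →* (Module.End ℂ (V ⧸ L))ˣ := quotHom ρ L hL with hρQ
    have hρQc : ∀ (φ : Module.Dual ℂ (V ⧸ L)) (w : V ⧸ L),
        Continuous fun h : G => φ ((ρQ h).1 w) := by
      intro φ w
      obtain ⟨u, rfl⟩ := Submodule.Quotient.mk_surjective L w
      have heq : (fun h : G => φ ((ρQ h).1 (Submodule.Quotient.mk u)))
          = fun h : G => (φ ∘ₗ L.mkQ) ((ρ h).1 u) := by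
        funext h
        have : (ρQ h).1 (Submodule.Quotient.mk u) = Submodule.Quotient.mk ((ρ h).1 u) :=
          quotEnd_mk ρ hL h u
        rw [this]
        rfl
      rw [heq]
      exact hρ (φ ∘ₗ L.mkQ) u
    obtain ⟨m, hm⟩ := ih G (V ⧸ L) hQrank ρQ hρQc g hg
    -- now lift nilpotence
    set A : Module.End ℂ V := (ρ g).1 - 1 with hA
    set B : Module.End ℂ (V ⧸ L) := (ρQ g).1 - 1 with hB
    have hmk : ∀ u : V, L.mkQ (A u) = B (L.mkQ u) := by
      intro u
      simp only [hA, hB, LinearMap.sub_apply, Module.End.one_apply, map_sub]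
      have h1 : (ρQ g).1 (L.mkQ u) = L.mkQ ((ρ g).1 u) := quotEnd_mk ρ hL g u
      rw [h1]
    have hmkpow : ∀ (j : ℕ) (u : V), L.mkQ ((A ^ j) u) = (B ^ j) (L.mkQ u) := by
      intro j
      induction j with
      | zero => intro u; simp
      | succ j ihj =>
        intro u
        rw [pow_succ, Module.End.mul_apply, pow_succ, Module.End.mul_apply, ← hmk u]
        exact ihj (A u)
    have hrange : ∀ u : V, (A ^ m) u ∈ L := by
      intro u
      have := hmkpow m u
      rw [hm] at this
      have h0 : L.mkQ ((A ^ m) u) = 0 := by rw [this]; rfl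
      rwa [Submodule.mkQ_apply, Submodule.Quotient.mk_eq_zero] at h0
    have hAv : A v = 0 := by
      rw [hA, LinearMap.sub_apply, Module.End.one_apply, hc g, hctriv, one_smul, sub_self]
    have hAL : ∀ u ∈ L, A u = 0 := by
      intro u hu
      obtain ⟨a, rfl⟩ := Submodule.mem_span_singleton.mp hu
      rw [map_smul, hAv, smul_zero]
    refine ⟨m + 1, ?_⟩
    apply LinearMap.ext; intro u
    rw [pow_succ', Module.End.mul_apply, LinearMap.zero_apply]
    exact hAL _ (hrange u)

theorem commutator_of_connected_solvable_no_compact (n : ℕ) (G : Subgroup (GL (Fin n) ℂ))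
    (hconn : IsConnected (G : Set (GL (Fin n) ℂ))) (hsolv : IsSolvable G) :
    (∀ K : Subgroup G, IsCompact (K : Set G) → K ≤ commutator G → K = ⊥) ∧
      ∀ g : G, g ∈ commutator G → IsOfFinOrder g → g = 1 := by
  classical
  haveI : ConnectedSpace ↥G := Subtype.connectedSpace hconn
  set V := (Fin n → ℂ) with hV
  set e : Matrix (Fin n) (Fin n) ℂ ≃ₐ[ℂ] Module.End ℂ V := Matrix.toLinAlgEquiv' with he
  set eM : Matrix (Fin n) (Fin n) ℂ →* Module.End ℂ V := e.toAlgHom.toRingHom.toMonoidHom with heM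
  set ρ : ↥G →* (Module.End ℂ V)ˣ := (Units.map eM).comp G.subtype with hρdef
  have hρ : ∀ (φ : Module.Dual ℂ V) (v : V), Continuous fun g : ↥G => φ ((ρ g).1 v) := by
    intro φ v
    set Φ : Matrix (Fin n) (Fin n) ℂ →ₗ[ℂ] ℂ :=
      φ ∘ₗ ((LinearMap.applyₗ v).comp e.toLinearMap) with hΦ
    have hΦc : Continuous Φ := Φ.continuous_of_finiteDimensional
    have : (fun g : ↥G => φ ((ρ g).1 v))
        = Φ ∘ (fun g : ↥G => ((g : GL (Fin n) ℂ) : Matrix (Fin n) (Fin n) ℂ)) := by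
      funext g
      rfl
    rw [this]
    exact hΦc.comp (Units.continuous_val.comp continuous_subtype_val)
  have hρinj : Function.Injective ρ := by
    intro a b hab
    have h1 : Function.Injective eM := e.injective
    have h2 : Function.Injective (Units.map eM) := Units.map_injective h1
    exact Subtype.coe_injective (h2 hab)
  have hnil : ∀ g : ↥G, g ∈ commutator ↥G → IsNilpotent ((ρ g).1 - 1) :=
    haveI : Group.IsSolvable ↥G := hsolv; commutator_nilpotent (Module.finrank ℂ V) ↥G V le_rfl ρ hρ
  -- key: an element of the commutator subgroup all of whose powers lie in a compact set is 1
  have key : ∀ (K : Subgroup ↥G), IsCompact (K : Set ↥G) → K ≤ commutator ↥G →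
      ∀ k ∈ K, k = 1 := by
    intro K hKcomp hKle k hk
    have hkc : k ∈ commutator ↥G := hKle hk
    obtain ⟨m, hm⟩ := hnil k hkc
    set Nl : Module.End ℂ V := (ρ k).1 - 1 with hNl
    have hNl0 : Nl = 0 := by
      by_contra hne
      -- find a vector w with Nl w ≠ 0 and Nl (Nl w) = 0
      have hex : ∃ j, Nl ^ j = 0 := ⟨m, hm⟩
      set m₀ := Nat.find hex with hm₀
      have hfind : Nl ^ m₀ = 0 := Nat.find_spec hex
      have hmin : ∀ j, j < m₀ → Nl ^ j ≠ 0 := fun j hj => Nat.find_min hex hj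
      have hm₀2 : 2 ≤ m₀ := by
        by_contra hlt
        push_neg at hlt
        interval_cases m₀
        · apply hne
          apply LinearMap.ext; intro u
          have h1 : (Nl ^ 0) u = 0 := by rw [hfind]; rfl
          rw [pow_zero, Module.End.one_apply] at h1
          rw [h1, map_zero]; rfl
        · apply hne; rw [← pow_one Nl]; exact hfind
      set j := m₀ - 1 with hj
      have hj1 : Nl ^ j ≠ 0 := hmin j (by omega)
      have hj2 : Nl ^ (j + 1) = 0 := by
        have : j + 1 = m₀ := by omega
        rw [this]; exact hfind
      obtain ⟨u, hu⟩ : ∃ u, (Nl ^ j) u ≠ 0 := by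
        by_contra hall
        push_neg at hall
        exact hj1 (LinearMap.ext fun u => hall u)
      set w : V := (Nl ^ (j - 1)) u with hw
      have hjj : j - 1 + 1 = j := by omega
      have hNw : Nl w = (Nl ^ j) u := by
        rw [hw, ← Module.End.mul_apply, ← pow_succ', hjj]
      have hNw0 : Nl w ≠ 0 := by rw [hNw]; exact hu
      have hNNw : Nl (Nl w) = 0 := by
        rw [hNw, ← Module.End.mul_apply, ← pow_succ', hj2]
        rfl
      obtain ⟨φ, hφ⟩ := exists_dual_one hNw0
      have hrk : (ρ k).1 = 1 + Nl := by rw [hNl]; abel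
      have hiter : ∀ p : ℕ, (ρ (k ^ p)).1 w = w + (p : ℂ) • Nl w := by
        intro p
        induction p with
        | zero => simp
        | succ p ihp =>
          rw [pow_succ', map_mul, Units.val_mul, Module.End.mul_apply, ihp, hrk]
          simp only [LinearMap.add_apply, Module.End.one_apply, map_add, map_smul, hNNw,
            smul_zero, add_zero]
          push_cast
          rw [add_smul, one_smul]
          abel
      set F : ↥G → ℂ := fun h => φ ((ρ h).1 w) with hF
      have hFc : Continuous F := hρ φ w
      have hFcomp : IsCompact (F '' (K : Set ↥G)) := hKcomp.image hFc
      obtain ⟨C, hC⟩ := hFcomp.isBounded.exists_norm_le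
      have hpt : ∀ p : ℕ, ‖φ w + (p : ℂ)‖ ≤ C := by
        intro p
        have hmem : k ^ p ∈ K := pow_mem hk p
        have : F (k ^ p) ∈ F '' (K : Set ↥G) := ⟨k ^ p, hmem, rfl⟩
        have hval : F (k ^ p) = φ w + (p : ℂ) := by
          rw [hF]
          simp only [hiter p, map_add, map_smul, hφ, smul_eq_mul, mul_one]
        rw [← hval]
        exact hC _ this
      -- contradiction for large p
      set p := ⌈C + ‖φ w‖⌉₊ + 1 with hp
      have h1 : ‖φ w + (p : ℂ)‖ ≤ C := hpt p
      have h2 : (p : ℝ) ≤ ‖φ w + (p : ℂ)‖ + ‖φ w‖ := by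
        calc (p : ℝ) = ‖((p : ℕ) : ℂ)‖ := (Complex.norm_natCast p).symm
          _ = ‖(φ w + (p : ℂ)) - φ w‖ := congrArg norm (by ring)
          _ ≤ ‖φ w + (p : ℂ)‖ + ‖φ w‖ := norm_sub_le _ _
      have h3 : C + ‖φ w‖ ≤ (⌈C + ‖φ w‖⌉₊ : ℝ) := Nat.le_ceil _
      have h4 : (p : ℝ) = (⌈C + ‖φ w‖⌉₊ : ℝ) + 1 := by
        rw [hp]; push_cast; ring
      linarith
    have hρk : ρ k = 1 := by
      apply Units.ext
      have : (ρ k).1 - 1 = 0 := hNl0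
      have h2 : (ρ k).1 = 1 := by rwa [sub_eq_zero] at this
      exact h2
    apply hρinj
    rw [hρk, map_one]
  constructor
  · intro K hKcomp hKle
    exact (Subgroup.eq_bot_iff_forall K).mpr (key K hKcomp hKle)
  · intro g hg hford
    have hfin : ((Subgroup.zpowers g : Subgroup ↥G) : Set ↥G).Finite := finite_zpowers.mpr hford
    have := key (Subgroup.zpowers g) hfin.isCompact (Subgroup.zpowers_le.mpr hg)
    exact this g (Subgroup.mem_zpowers g)
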